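/- Let X be a finite topological space and F a sheaf of abelian groups on X. Define C^n F as the sheaf whose sections over an open U are the product over chains x_0 < x_1 < ... < x_n in U of the stalks F_{x_n}, with the standard simplicial differential. Then 0 → F → C^0 F → C^1 F → ... → C^{dim X} F → 0 is an exact sequence of sheaves, and each C^n F is flasque. -/

import Mathlib

set_option maxHeartbeats 1000000
set_option synthInstance.maxHeartbeats 400000

/-- A sheaf of abelian groups on a finite topological space, encoded combinatorially: the space
is a finite preordered set (Alexandrov topology, opens = upper sets, `U_x = Set.Ici x` the
minimal open neighbourhood of `x`), and the sheaf is given by its stalks `F x = F(U_x)` together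
with compatible restriction homomorphisms. -/
structure AbSh (X : Type) [Preorder X] : Type 1 where
  F : X → Type
  [ab : ∀ x, AddCommGroup (F x)]
  res : ∀ {x y : X}, x ≤ y → F x →+ F y
  res_refl : ∀ (x : X) (m : F x), res (le_refl x) m = m
  res_trans : ∀ {x y z : X} (h₁ : x ≤ y) (h₂ : y ≤ z) (m : F x),
      res h₂ (res h₁ m) = res (h₁.trans h₂) m

attribute [instance] AbSh.ab

namespace AbSh

variable {X : Type} [Preorder X]

/-- Strictly increasing chains `x₀ < ⋯ < xₙ` inside a subset `U`. -/
def chainIn (n : ℕ) (U : Set X) : Type :=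
  { c : Fin (n + 1) → X // StrictMono c ∧ ∀ i, c i ∈ U }

/-- The group `C^n F(U)` of `n`-cochains of the standard (Godement) complex over `U`: a cochain
assigns to every chain `x₀ < ⋯ < xₙ` in `U` an element of `F_{xₙ}`. -/
abbrev cochain (F : AbSh X) (n : ℕ) (U : Set X) : Type :=
  ∀ c : chainIn n U, F.F (c.1 (Fin.last n))

/-- The `i`-th face of a chain (omit the `i`-th vertex). -/
def chainIn.face {n : ℕ} {U : Set X} (i : Fin (n + 2)) (c : chainIn (n + 1) U) :
    chainIn n U :=
  ⟨c.1 ∘ i.succAbove, (c.2.1.comp (Fin.strictMono_succAbove i)), fun j => c.2.2 _⟩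

/-- The differential `C^n F(U) → C^{n+1} F(U)` of the standard complex (the alternating sum of
the faces, the last term being restricted to `F_{x_{n+1}}`). -/
def d (F : AbSh X) (n : ℕ) (U : Set X) : cochain F n U →+ cochain F (n + 1) U where
  toFun a c := ∑ i : Fin (n + 2),
    ((-1 : ℤ) ^ (i : ℕ)) • F.res (c.2.1.monotone (Fin.le_last _)) (a (chainIn.face i c))
  map_zero' := by
    funext c
    exact Finset.sum_eq_zero fun i _ =>
      (congrArg (HSMul.hSMul ((-1 : ℤ) ^ (i : ℕ))) (map_zero _)).trans (smul_zero _)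
  map_add' a b := by
    funext c
    simp only [Pi.add_apply]
    rw [← Finset.sum_add_distrib]
    exact Finset.sum_congr rfl fun i _ =>
      (congrArg (HSMul.hSMul ((-1 : ℤ) ^ (i : ℕ))) (map_add _ _ _)).trans (smul_add _ _ _)

/-- The cocycles. -/
def cocycles (F : AbSh X) (n : ℕ) (U : Set X) : AddSubgroup (cochain F n U) :=
  (d F n U).ker

/-- The coboundaries, viewed inside the cocycles. -/
def bdries (F : AbSh X) (U : Set X) : (n : ℕ) → AddSubgroup ↥(cocycles F n U)
  | 0 => ⊥
  | (k + 1) => ((d F k U).range).addSubgroupOf (cocycles F (k + 1) U)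

/-- The sheaf cohomology `Hⁿ(U, F)` computed via the standard complex (which, on a finite
topological space, is a finite flasque resolution of `F`). -/
def H (F : AbSh X) (n : ℕ) (U : Set X) : Type :=
  ↥(cocycles F n U) ⧸ bdries F U n

instance (F : AbSh X) (n : ℕ) (U : Set X) : AddCommGroup (H F n U) :=
  inferInstanceAs (AddCommGroup (↥(cocycles F n U) ⧸ bdries F U n))

end AbSh

namespace AbSh

variable {X : Type} [Preorder X]

/-- The augmentation `F_x = F(U_x) → C⁰F(U_x)`. -/
def aug (F : AbSh X) (x : X) : F.F x →+ cochain F 0 (Set.Ici x) where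
  toFun m c := F.res (c.2.2 (Fin.last 0)) m
  map_zero' := by funext c; simp
  map_add' a b := by funext c; simp

/-- The restriction map `C^nF(U) → C^nF(V)` for `V ⊆ U`. -/
def cochainRes (F : AbSh X) (n : ℕ) {U V : Set X} (hVU : V ⊆ U) :
    cochain F n U →+ cochain F n V where
  toFun a c := a ⟨c.1, c.2.1, fun i => hVU (c.2.2 i)⟩
  map_zero' := rfl
  map_add' _ _ := rfl

/-- The (combinatorial) dimension of `X`: the length of the longest strictly increasing chain. -/
noncomputable def dim (X : Type) [Preorder X] : ℕ :=
  sSup { n | ∃ c : Fin (n + 1) → X, StrictMono c }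

end AbSh

namespace AbSh

variable {X : Type} [Preorder X]

lemma val_succAbove {n : ℕ} (i : Fin (n+1)) (k : Fin n) :
    ((i.succAbove k : Fin (n+1)) : ℕ) = if (k:ℕ) < (i:ℕ) then (k:ℕ) else (k:ℕ)+1 := by
  rw [Fin.succAbove]; split_ifs with h1 h2 h2 <;> simp_all [Fin.lt_def]

lemma pair_cancel (F : AbSh X) {n : ℕ} {U : Set X} (a : cochain F n U) {y : X}
    (c₁ c₂ : chainIn n U) (e : c₁ = c₂)
    (h₁ : c₁.1 (Fin.last n) ≤ y) (h₂ : c₂.1 (Fin.last n) ≤ y) (z w : ℤ)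
    (hzw : z + w = 0) :
    z • F.res h₁ (a c₁) + w • F.res h₂ (a c₂) = 0 := by
  subst e
  show z • F.res h₁ (a c₁) + w • F.res h₁ (a c₁) = 0
  rw [← add_smul, hzw, zero_smul]

lemma face_face {n : ℕ} {U : Set X} (c : chainIn (n+2) U) (i : Fin (n+3)) (j : Fin (n+2))
    (h : (j:ℕ) < (i:ℕ)) :
    (c.face i).face j =
      (c.face ⟨(j:ℕ), by omega⟩).face ⟨(i:ℕ)-1, by omega⟩ := by
  have key : (i.succAbove) ∘ (j.succAbove) =
      (Fin.succAbove ⟨(j:ℕ), by omega⟩) ∘ (Fin.succAbove ⟨(i:ℕ)-1, by omega⟩) := by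
    funext k
    apply Fin.ext
    simp only [Function.comp_apply, val_succAbove]
    split_ifs <;> omega
  apply Subtype.ext
  funext k
  show c.1 (i.succAbove (j.succAbove k)) = _
  rw [show i.succAbove (j.succAbove k) = _ from congrFun key k]
  rfl

/-- `d ∘ d = 0`. -/
lemma d_d (F : AbSh X) (n : ℕ) (U : Set X) (a : cochain F n U) :
    d F (n+1) U (d F n U a) = 0 := by
  funext c
  have PF : ∀ (i : Fin (n+3)) (j : Fin (n+2)),
      ((c.face i).face j).1 (Fin.last n) ≤ c.1 (Fin.last (n+2)) :=
    fun i j => le_trans ((c.face i).2.1.monotone (Fin.le_last _))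
      (c.2.1.monotone (Fin.le_last _))
  show (∑ i : Fin (n + 3), ((-1 : ℤ) ^ (i : ℕ)) •
      F.res (c.2.1.monotone (Fin.le_last _)) ((d F n U a) (chainIn.face i c))) = 0
  have key : ∀ i : Fin (n+3), ((-1 : ℤ) ^ (i : ℕ)) •
      F.res (c.2.1.monotone (Fin.le_last _)) ((d F n U a) (chainIn.face i c)) =
      ∑ j : Fin (n+2), ((-1 : ℤ) ^ ((i:ℕ)+(j:ℕ))) •
        F.res (PF i j) (a ((c.face i).face j)) := by
    intro i
    show ((-1 : ℤ) ^ (i : ℕ)) • F.res (c.2.1.monotone (Fin.le_last _))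
      (∑ j : Fin (n+2), ((-1 : ℤ) ^ (j : ℕ)) •
        F.res ((c.face i).2.1.monotone (Fin.le_last _)) (a ((c.face i).face j))) = _
    refine ((congrArg (HSMul.hSMul _) (map_sum (F.res _) _ _)).trans Finset.smul_sum).trans ?_
    refine Finset.sum_congr rfl fun j _ => ?_
    exact ((congrArg (HSMul.hSMul _) (map_zsmul (F.res _) _ _)).trans (smul_smul _ _ _)).trans
      (congrArg₂ (· • ·) (pow_add _ _ _).symm (F.res_trans _ _ _))
  rw [Finset.sum_congr rfl (fun i _ => key i), ← Finset.sum_product']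
  refine Finset.sum_involution
    (fun p _ => if h : (p.2:ℕ) < (p.1:ℕ)
      then (⟨(p.2:ℕ), by omega⟩, ⟨(p.1:ℕ)-1, by omega⟩)
      else (⟨(p.2:ℕ)+1, by omega⟩, ⟨(p.1:ℕ), by omega⟩))
    ?_ ?_ (fun p _ => Finset.mem_univ _) ?_
  · rintro ⟨i, j⟩ -
    dsimp only
    by_cases h : (j:ℕ) < (i:ℕ)
    · rw [dif_pos h]
      refine pair_cancel F a _ _ (face_face c i j h) _ _ _ _ ?_
      show ((-1:ℤ))^((i:ℕ)+(j:ℕ)) + (-1)^((j:ℕ)+((i:ℕ)-1)) = 0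
      have e : (i:ℕ)+(j:ℕ) = ((j:ℕ)+((i:ℕ)-1))+1 := by omega
      rw [e, pow_succ]; ring
    · rw [dif_neg h]
      have h2 : (j:ℕ)+1 ≤ n+2 := by omega
      refine pair_cancel F a _ _
        ((face_face c ⟨(j:ℕ)+1, by omega⟩ ⟨(i:ℕ), by omega⟩
          (show (i:ℕ) < (j:ℕ)+1 by omega)).symm)
        _ _ _ _ ?_
      show ((-1:ℤ))^((i:ℕ)+(j:ℕ)) + (-1)^(((j:ℕ)+1)+(i:ℕ)) = 0
      have e : ((j:ℕ)+1)+(i:ℕ) = ((i:ℕ)+(j:ℕ))+1 := by omega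
      rw [e, pow_succ]; ring
  · rintro ⟨i, j⟩ - -
    dsimp only
    by_cases h : (j:ℕ) < (i:ℕ)
    · rw [dif_pos h]; intro e
      have := congrArg (fun q : Fin (n+3) × Fin (n+2) => (q.1 : ℕ)) e
      simp at this; omega
    · rw [dif_neg h]; intro e
      have := congrArg (fun q : Fin (n+3) × Fin (n+2) => (q.1 : ℕ)) e
      simp at this; omega
  · rintro ⟨i, j⟩ -
    dsimp only
    by_cases h : (j:ℕ) < (i:ℕ)
    · rw [dif_pos h, dif_neg (by simp; omega)]
      ext <;> simp <;> omega
    · rw [dif_neg h, dif_pos (by simp; omega)]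
      ext <;> simp <;> omega

/-- The one-point chain `x` in `Ici x`. -/
def singChain (x : X) : chainIn 0 (Set.Ici x) :=
  ⟨fun _ => x, fun a b hab => absurd
      (Fin.ext (by rw [Nat.lt_one_iff.1 a.isLt, Nat.lt_one_iff.1 b.isLt]) : a = b)
      (ne_of_lt hab),
    fun _ => le_refl x⟩

/-- Prepend `x` to a chain in `Ici x`. -/
def consChain {x : X} {n : ℕ} (c : chainIn n (Set.Ici x)) (hx : x < c.1 0) :
    chainIn (n+1) (Set.Ici x) := by
  refine ⟨Fin.cons x c.1, ?_, fun i => ?_⟩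
  · refine Fin.strictMono_iff_lt_succ.2 fun i => ?_
    induction i using Fin.cases with
    | zero => simpa using hx
    | succ k =>
        rw [← Fin.succ_castSucc]
        simpa using c.2.1 (Fin.castSucc_lt_succ : k.castSucc < k.succ)
  · induction i using Fin.cases with
    | zero => exact le_refl x
    | succ k => exact c.2.2 k

lemma consChain_face_zero {x : X} {n : ℕ} (c : chainIn n (Set.Ici x)) (hx : x < c.1 0) :
    (consChain c hx).face 0 = c := by
  apply Subtype.ext
  funext k
  show Fin.cons (α := fun _ => X) x c.1 ((0 : Fin (n+2)).succAbove k) = c.1 k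
  rw [Fin.zero_succAbove, Fin.cons_succ]

lemma face_zero_lt {x : X} {n : ℕ} (c : chainIn (n+1) (Set.Ici x)) (i : Fin (n+2))
    (hx : x < c.1 0) : x < (c.face i).1 0 :=
  lt_of_lt_of_le hx (c.2.1.monotone (Fin.zero_le _))

lemma consChain_face_succ {x : X} {n : ℕ} (c : chainIn (n+1) (Set.Ici x))
    (hx : x < c.1 0) (i : Fin (n+2)) :
    (consChain c hx).face i.succ = consChain (c.face i) (face_zero_lt c i hx) := by
  apply Subtype.ext
  funext k
  show Fin.cons (α := fun _ => X) x c.1 (i.succ.succAbove k) = Fin.cons (α := fun _ => X) x (c.1 ∘ i.succAbove) k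
  induction k using Fin.cases with
  | zero => rw [Fin.succ_succAbove_zero, Fin.cons_zero, Fin.cons_zero]
  | succ m => rw [Fin.succ_succAbove_succ, Fin.cons_succ, Fin.cons_succ]; rfl

lemma term_eq (F : AbSh X) {n : ℕ} {U : Set X} (a : cochain F n U) {y : X}
    (c₁ c₂ : chainIn n U) (e : c₁ = c₂)
    (h₁ : c₁.1 (Fin.last n) ≤ y) (h₂ : c₂.1 (Fin.last n) ≤ y) :
    F.res h₁ (a c₁) = F.res h₂ (a c₂) := by subst e; rfl

lemma res_self_eq (F : AbSh X) {n : ℕ} {U : Set X} (a : cochain F n U)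
    (c₁ c₂ : chainIn n U) (e : c₁ = c₂)
    (h₁ : c₁.1 (Fin.last n) ≤ c₂.1 (Fin.last n)) :
    F.res h₁ (a c₁) = a c₂ := by subst e; exact F.res_refl _ _

/-- The contracting homotopy on `Ici x`. -/
noncomputable def hmt (F : AbSh X) (x : X) (n : ℕ) (a : cochain F (n+1) (Set.Ici x)) :
    cochain F n (Set.Ici x) :=
  fun c => @dite _ (x < c.1 0) (Classical.dec _) (fun hx => a (consChain c hx)) (fun _ => 0)

lemma hmt_pos (F : AbSh X) (x : X) (n : ℕ) (a : cochain F (n+1) (Set.Ici x))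
    (c : chainIn n (Set.Ici x)) (hx : x < c.1 0) :
    hmt F x n a c = a (consChain c hx) := dif_pos hx

lemma hmt_neg (F : AbSh X) (x : X) (n : ℕ) (a : cochain F (n+1) (Set.Ici x))
    (c : chainIn n (Set.Ici x)) (hx : ¬ x < c.1 0) :
    hmt F x n a c = 0 := dif_neg hx

end AbSh
theorem AbSh.standard_resolution {X : Type} [Finite X] [PartialOrder X] (F : AbSh X) :
    (∀ x : X, Function.Injective (AbSh.aug F x)) ∧
    (∀ x : X, (AbSh.aug F x).range = (AbSh.d F 0 (Set.Ici x)).ker) ∧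
    (∀ (x : X) (n : ℕ),
        (AbSh.d F n (Set.Ici x)).range = (AbSh.d F (n + 1) (Set.Ici x)).ker) ∧
    (∀ (n : ℕ) (U V : Set X), IsUpperSet U → IsUpperSet V → ∀ hVU : V ⊆ U,
        Function.Surjective (AbSh.cochainRes F n hVU)) ∧
    (∀ (n : ℕ) (U : Set X), AbSh.dim X < n → Subsingleton (AbSh.cochain F n U)) := by
  classical
  refine ⟨?_, ?_, ?_, ?_, ?_⟩
  · -- injectivity of the augmentation
    intro x m m' h
    have h' := congrFun h (singChain x)
    exact (F.res_refl x m).symm.trans (h'.trans (F.res_refl x m'))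
  · -- range aug = ker d⁰
    intro x
    ext a
    simp only [AddMonoidHom.mem_range, AddMonoidHom.mem_ker]
    constructor
    · rintro ⟨m, rfl⟩
      funext c
      show (∑ i : Fin 2, ((-1:ℤ)^(i:ℕ)) •
        F.res (c.2.1.monotone (Fin.le_last _)) ((aug F x) m (chainIn.face i c))) = 0
      rw [Fin.sum_univ_two]
      simp only [Fin.isValue, Fin.val_zero, pow_zero, one_smul, Fin.val_one, pow_one,
        neg_smul, neg_one_smul]
      rw [add_neg_eq_zero]
      exact (F.res_trans _ _ _).trans (F.res_trans _ _ _).symm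
    · intro ha
      refine ⟨a (singChain x), ?_⟩
      funext c
      show F.res (c.2.2 (Fin.last 0)) (a (singChain x)) = a c
      rcases (c.2.2 (Fin.last 0) : x ≤ c.1 (Fin.last 0)).lt_or_eq with hlt | heq
      · have hlt0 : x < c.1 0 := hlt
        have h0 : (∑ i : Fin 2, ((-1:ℤ)^(i:ℕ)) •
            F.res (show ((consChain c hlt0).face i).1 (Fin.last 0) ≤ c.1 (Fin.last 0) from
              (consChain c hlt0).2.1.monotone (Fin.le_last _))
            (a ((consChain c hlt0).face i))) = 0 := congrFun ha (consChain c hlt0)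
        rw [Fin.sum_univ_two] at h0
        have e1 : (consChain c hlt0).face 1 = singChain x := by
          apply Subtype.ext; funext k
          have hk : k = 0 := Fin.ext (Nat.lt_one_iff.1 k.isLt)
          subst hk
          show Fin.cons (α := fun _ => X) x c.1 ((1:Fin 2).succAbove 0) = x
          rfl
        rw [res_self_eq F a _ c (consChain_face_zero c hlt0)] at h0
        rw [term_eq F a _ _ e1 _
          (show (singChain x).1 (Fin.last 0) ≤ c.1 (Fin.last 0) from c.2.2 (Fin.last 0))] at h0
        simp only [Fin.isValue, Fin.val_zero, pow_zero, one_smul, Fin.val_one, pow_one,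
          neg_smul, neg_one_smul] at h0
        have := neg_eq_of_add_eq_zero_left h0
        rwa [neg_neg] at this
      · have ec : singChain x = c := by
          apply Subtype.ext; funext k
          have hk : k = Fin.last 0 := Fin.ext (Nat.lt_one_iff.1 k.isLt)
          subst hk; exact heq
        exact res_self_eq F a _ c ec _
  · -- range dⁿ = ker d^{n+1}
    intro x n
    ext a
    simp only [AddMonoidHom.mem_range, AddMonoidHom.mem_ker]
    constructor
    · rintro ⟨b, rfl⟩
      exact d_d F n _ b
    · intro ha
      refine ⟨hmt F x n a, ?_⟩
      funext c
      show (∑ i : Fin (n+2), ((-1:ℤ)^(i:ℕ)) •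
        F.res (c.2.1.monotone (Fin.le_last _)) (hmt F x n a (chainIn.face i c))) = a c
      by_cases hx : x < c.1 0
      · have h0 : (∑ i : Fin (n+3), ((-1:ℤ)^(i:ℕ)) •
            F.res (show ((consChain c hx).face i).1 (Fin.last (n+1)) ≤ c.1 (Fin.last (n+1)) from
              (consChain c hx).2.1.monotone (Fin.le_last _))
            (a ((consChain c hx).face i))) = 0 := congrFun ha (consChain c hx)
        rw [Fin.sum_univ_succ] at h0
        rw [res_self_eq F a _ c (consChain_face_zero c hx)] at h0
        simp only [Fin.val_zero, pow_zero, one_smul] at h0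
        have key : ∀ i : Fin (n+2), ((-1:ℤ)^(i:ℕ)) •
            F.res (c.2.1.monotone (Fin.le_last _)) (hmt F x n a (chainIn.face i c)) =
            -(((-1:ℤ)^((Fin.succ i : Fin (n+3)):ℕ)) •
              F.res (show ((consChain c hx).face (Fin.succ i)).1 (Fin.last (n+1)) ≤
                  c.1 (Fin.last (n+1)) from
                (consChain c hx).2.1.monotone (Fin.le_last _))
              (a ((consChain c hx).face (Fin.succ i)))) := by
          intro i
          rw [hmt_pos F x n a (chainIn.face i c) (face_zero_lt c i hx)]
          rw [Fin.val_succ, pow_succ, mul_neg_one, neg_smul, neg_neg]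
          exact congrArg (HSMul.hSMul ((-1:ℤ)^(i:ℕ)))
            (term_eq F a _ _ (consChain_face_succ c hx i) _ _).symm
        rw [Finset.sum_congr rfl (fun i _ => key i), Finset.sum_neg_distrib]
        exact neg_eq_of_add_eq_zero_left h0
      · have hx0 : x = c.1 0 := ((c.2.2 0).lt_or_eq).resolve_left hx
        rw [Fin.sum_univ_succ]
        have tail : ∀ i : Fin (n+1), ((-1:ℤ)^((Fin.succ i : Fin (n+2)):ℕ)) •
            F.res (c.2.1.monotone (Fin.le_last _))
              (hmt F x n a (chainIn.face (Fin.succ i) c)) = 0 := by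
          intro i
          rw [hmt_neg F x n a _ (show ¬ x < (chainIn.face (Fin.succ i) c).1 0 from by
            show ¬ x < c.1 ((Fin.succ i).succAbove 0)
            rw [Fin.succ_succAbove_zero]
            exact hx)]
          exact (congrArg (HSMul.hSMul _) (map_zero _)).trans (smul_zero _)
        have h1 : x < (chainIn.face 0 c).1 0 := by
          show x < c.1 ((0 : Fin (n+2)).succAbove 0)
          rw [Fin.zero_succAbove]
          exact lt_of_le_of_lt (le_of_eq hx0) (c.2.1 (Fin.succ_pos 0))
        have e : consChain (chainIn.face 0 c) h1 = c := by
          apply Subtype.ext; funext k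
          induction k using Fin.cases with
          | zero => exact hx0
          | succ m =>
              show Fin.cons (α := fun _ => X) x ((chainIn.face 0 c).1) m.succ = c.1 m.succ
              rw [Fin.cons_succ]
              show c.1 ((0 : Fin (n+2)).succAbove m) = c.1 m.succ
              rw [Fin.zero_succAbove]
        have hhead : ((-1:ℤ)^(((0 : Fin (n+2))):ℕ)) •
            F.res (c.2.1.monotone (Fin.le_last _)) (hmt F x n a (chainIn.face 0 c)) = a c := by
          rw [hmt_pos F x n a (chainIn.face 0 c) h1]
          simp only [Fin.val_zero, pow_zero, one_smul]
          exact res_self_eq F a _ c e _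
        rw [hhead, Finset.sum_congr rfl (fun i _ => tail i), Finset.sum_const_zero, add_zero]
  · -- flasqueness
    intro n U V _ _ hVU a
    refine ⟨fun c => if h : ∀ i, c.1 i ∈ V then a ⟨c.1, c.2.1, h⟩ else 0, ?_⟩
    funext c
    show (if h : ∀ i, c.1 i ∈ V then a ⟨c.1, c.2.1, h⟩ else 0) = a c
    exact dif_pos c.2.2
  · -- vanishing above the dimension
    intro n U hn
    constructor
    intro a b
    funext c
    exfalso
    have hmem : n ∈ {m | ∃ f : Fin (m+1) → X, StrictMono f} := ⟨c.1, c.2.1⟩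
    have hbdd : BddAbove {m | ∃ f : Fin (m+1) → X, StrictMono f} := by
      refine ⟨Nat.card X, fun m hm => ?_⟩
      obtain ⟨f, hf⟩ := hm
      have h1 : Nat.card (Fin (m+1)) = m + 1 := by simp
      have h2 : Nat.card (Fin (m+1)) ≤ Nat.card X :=
        Nat.card_le_card_of_injective f hf.injective
      omega
    exact absurd (le_csSup hbdd hmem) (not_le.2 hn)
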